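/- For every positive odd integer n, (q;q^2)_{(n-1)/2}^2 / (aq^2, q^2/a; q^2)_{(n-1)/2} ≡ n(1-a) a^{(n-1)/2} / ((1-a^n) q^{(n-1)/2}) modulo Φ_n(q), as a congruence of rational functions in q and a. -/

import Mathlib

open Finset

set_option synthInstance.maxHeartbeats 1000000
set_option maxHeartbeats 4000000
set_option linter.unusedSectionVars false

noncomputable section

abbrev KK : Type := FractionRing (MvPolynomial (Fin 4) ℚ)
abbrev FF : Type := RatFunc KK

def q : FF := RatFunc.X
def aK : KK := algebraMap (MvPolynomial (Fin 4) ℚ) KK (MvPolynomial.X 0)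
def bK : KK := algebraMap (MvPolynomial (Fin 4) ℚ) KK (MvPolynomial.X 1)
def cK : KK := algebraMap (MvPolynomial (Fin 4) ℚ) KK (MvPolynomial.X 2)
def dK : KK := algebraMap (MvPolynomial (Fin 4) ℚ) KK (MvPolynomial.X 3)
def pa : FF := RatFunc.C aK
def pb : FF := RatFunc.C bK
def pc : FF := RatFunc.C cK
def pd : FF := RatFunc.C dK

/-- q-shifted factorial (x; Q)_m = prod_{j<m} (1 - x Q^j) -/
def qPoch (x Q : FF) (m : ℕ) : FF := ∏ j ∈ Finset.range m, (1 - x * Q ^ j)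

/-- q-integer [m] = (1-q^m)/(1-q) -/
def qInt (m : ℕ) : FF := (1 - q ^ m) / (1 - q)

/-- the polynomial [n] = 1 + q + ... + q^{n-1} -/
def Pn (n : ℕ) : Polynomial KK := ∑ i ∈ Finset.range n, Polynomial.X ^ i

/-- congruence of rational functions modulo a polynomial D:
A - B = D * P / Q with Q coprime to D -/
def modCong (A B : FF) (D : Polynomial KK) : Prop :=
  ∃ P Q : Polynomial KK, IsCoprime Q D ∧
    (A - B) * algebraMap (Polynomial KK) FF Q =
      algebraMap (Polynomial KK) FF D * algebraMap (Polynomial KK) FF P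

/-! ### Field lemmas about primitive roots of unity -/

section FieldLemmas

open Polynomial

variable {L : Type*} [Field L] [DecidableEq L]

lemma nthRootsFinset_eq_image' {n : ℕ} (hn : 0 < n) {ζ : L} (hζ : IsPrimitiveRoot ζ n) :
    Polynomial.nthRootsFinset n (1 : L) = (Finset.range n).image (ζ ^ ·) := by
  haveI : NeZero n := ⟨hn.ne'⟩
  ext μ
  simp only [Polynomial.mem_nthRootsFinset hn, Finset.mem_image, Finset.mem_range]
  constructor
  · intro h
    obtain ⟨i, hi, rfl⟩ := hζ.eq_pow_of_pow_eq_one h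
    exact ⟨i, hi, rfl⟩
  · rintro ⟨i, _, rfl⟩
    rw [← pow_mul, mul_comm, pow_mul, hζ.pow_eq_one, one_pow]

lemma prod_X_sub_pow' {n : ℕ} (hn : 0 < n) {ζ : L} (hζ : IsPrimitiveRoot ζ n) :
    ∏ k ∈ Finset.range n, (X - C (ζ ^ k)) = X ^ n - 1 := by
  rw [X_pow_sub_one_eq_prod hn hζ, nthRootsFinset_eq_image' hn hζ,
    Finset.prod_image (fun i hi j hj h => hζ.injOn_pow (by simpa using hi) (by simpa using hj) h)]

lemma prod_sub_pow' {n : ℕ} (hn : 0 < n) {ζ : L} (hζ : IsPrimitiveRoot ζ n) (y : L) :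
    ∏ k ∈ Finset.range n, (y - ζ ^ k) = y ^ n - 1 := by
  have := congrArg (Polynomial.eval y) (prod_X_sub_pow' hn hζ)
  simpa [Polynomial.eval_prod] using this

lemma prod_one_sub_mul' {m : ℕ} {ζ : L} (hζ : IsPrimitiveRoot ζ (2*m+1)) (x : L) :
    ∏ k ∈ Finset.range (2*m+1), (1 - x * ζ ^ k) = 1 - x ^ (2*m+1) := by
  have hz : ζ ≠ 0 := hζ.ne_zero (by omega)
  have hinv : IsPrimitiveRoot ζ⁻¹ (2*m+1) := hζ.inv
  have h1 : ∀ k ∈ Finset.range (2*m+1), (1 - x * ζ ^ k) = (-ζ^k) * (x - (ζ⁻¹)^k) := by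
    intro k _
    field_simp
    rw [mul_sub, ← mul_pow, mul_one_div_cancel hz, one_pow]
    ring
  rw [Finset.prod_congr rfl h1, Finset.prod_mul_distrib, prod_sub_pow' (by omega) hinv x]
  have hsum : ∑ k ∈ Finset.range (2*m+1), k = (2*m+1)*m := by
    have h : (∑ k ∈ Finset.range (2*m+1), k)*2 = ((2*m+1)*m)*2 := by
      rw [Finset.sum_range_id_mul_two, Nat.add_sub_cancel]; ring
    exact Nat.eq_of_mul_eq_mul_right (by norm_num) h
  have h2 : ∏ k ∈ Finset.range (2*m+1), (-ζ^k) = (-1)^(2*m+1) * ζ^((2*m+1)*m) := by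
    calc ∏ k ∈ Finset.range (2*m+1), (-ζ^k)
        = ∏ k ∈ Finset.range (2*m+1), ((-1) * ζ^k) := Finset.prod_congr rfl fun k _ => by ring
      _ = (-1)^(2*m+1) * ζ^((2*m+1)*m) := by
          rw [Finset.prod_mul_distrib, Finset.prod_const, Finset.card_range,
            Finset.prod_pow_eq_pow_sum, hsum]
  rw [h2, pow_mul, hζ.pow_eq_one, one_pow]
  have : (-1:L)^(2*m+1) = -1 := Odd.neg_one_pow ⟨m, by ring⟩
  rw [this]; ring

lemma prod_split' (f : ℕ → L) (m : ℕ) :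
    ∏ k ∈ Finset.range (2*m), f (k+1)
      = (∏ j ∈ Finset.range m, f (2*j+1)) * ∏ j ∈ Finset.range m, f (2*j+2) := by
  induction m with
  | zero => simp
  | succ m ih =>
    rw [show 2*(m+1) = (2*m)+1+1 by ring, Finset.prod_range_succ, Finset.prod_range_succ, ih,
      Finset.prod_range_succ, Finset.prod_range_succ,
      show 2*m+1+1 = 2*m+2 by ring]
    ring

lemma sum_two_mul_add_two' (m : ℕ) : ∑ j ∈ Finset.range m, (2*j+2) = m^2+m := by
  induction m with
  | zero => simp
  | succ k ih => rw [Finset.sum_range_succ, ih]; ring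

lemma reflect_prod' {m : ℕ} {ζ : L} (hζ : IsPrimitiveRoot ζ (2*m+1)) (x : L) (hx : x ≠ 0) :
    x^m * ∏ j ∈ Finset.range m, (1 - x⁻¹ * ζ^(2*j+2))
      = (-1)^m * ζ^(m^2+m) * ∏ j ∈ Finset.range m, (1 - x * ζ^(2*j+1)) := by
  have hz : ζ ≠ 0 := hζ.ne_zero (by omega)
  have step1 : x^m * ∏ j ∈ Finset.range m, (1 - x⁻¹ * ζ^(2*j+2))
      = ∏ j ∈ Finset.range m, (x - ζ^(2*j+2)) := by
    have hxm : x^m = ∏ _j ∈ Finset.range m, x := by simp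
    rw [hxm, ← Finset.prod_mul_distrib]
    exact Finset.prod_congr rfl fun j _ => by field_simp
  have step2 : ∀ j ∈ Finset.range m, (x - ζ^(2*j+2))
      = (-ζ^(2*j+2)) * (1 - x * ζ^(2*(m-1-j)+1)) := by
    intro j hj
    have hj' : j < m := Finset.mem_range.mp hj
    have he : (2*j+2) + (2*(m-1-j)+1) = 2*m+1 := by omega
    have h1 : ζ^(2*j+2) * ζ^(2*(m-1-j)+1) = 1 := by
      rw [← pow_add, he, hζ.pow_eq_one]
    linear_combination (-x) * h1
  rw [step1, Finset.prod_congr rfl step2, Finset.prod_mul_distrib]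
  have h3 : ∏ j ∈ Finset.range m, (-ζ^(2*j+2)) = (-1)^m * ζ^(m^2+m) := by
    calc ∏ j ∈ Finset.range m, (-ζ^(2*j+2))
        = ∏ j ∈ Finset.range m, ((-1) * ζ^(2*j+2)) := Finset.prod_congr rfl fun k _ => by ring
      _ = (-1)^m * ζ^(m^2+m) := by
          rw [Finset.prod_mul_distrib, Finset.prod_const, Finset.card_range,
            Finset.prod_pow_eq_pow_sum, sum_two_mul_add_two']
  rw [h3]
  congr 1
  exact Finset.prod_range_reflect (fun j => 1 - x * ζ^(2*j+1)) m

lemma prod_one_sub_pow' {m : ℕ} {ζ : L} (hζ : IsPrimitiveRoot ζ (2*m+1)) :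
    ∏ k ∈ Finset.range (2*m), (1 - ζ^(k+1)) = ((2*m+1 : ℕ) : L) := by
  have hp := prod_X_sub_pow' (by omega : 0 < 2*m+1) hζ
  rw [Finset.prod_range_succ'] at hp
  have hg : (X : L[X]) ^ (2*m+1) - 1 = (∑ i ∈ Finset.range (2*m+1), X^i) * (X - 1) :=
    (geom_sum_mul (X : L[X]) (2*m+1)).symm
  rw [hg] at hp
  simp only [pow_zero, map_one] at hp
  have hX1 : (X : L[X]) - 1 ≠ 0 := by
    intro h
    have := congrArg (Polynomial.coeff · 1) h
    simp [Polynomial.coeff_one] at this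
  have hcan : (∏ k ∈ Finset.range (2*m), (X - C (ζ^(k+1)))) = ∑ i ∈ Finset.range (2*m+1), X^i :=
    mul_right_cancel₀ hX1 (by rw [hp])
  have := congrArg (Polynomial.eval 1) hcan
  simpa [Polynomial.eval_prod, Polynomial.eval_finset_sum] using this

/-- the key identity at a primitive (2m+1)-th root of unity -/
lemma key_identity {m : ℕ} {ζ : L} (hζ : IsPrimitiveRoot ζ (2*m+1)) (x : L) (hx : x ≠ 0) :
    (∏ j ∈ Finset.range m, (1 - ζ^(2*j+1)))^2 * (1 - x^(2*m+1)) * ζ^m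
      = ((2*m+1 : ℕ) : L) * (1 - x) * x^m * ((∏ j ∈ Finset.range m, (1 - x * ζ^(2*j+2))) *
          ∏ j ∈ Finset.range m, (1 - x⁻¹ * ζ^(2*j+2))) := by
  set O := ∏ j ∈ Finset.range m, (1 - ζ^(2*j+1)) with hO
  set Ox := ∏ j ∈ Finset.range m, (1 - x * ζ^(2*j+1)) with hOx
  set Ex := ∏ j ∈ Finset.range m, (1 - x * ζ^(2*j+2)) with hEx
  set Ix := ∏ j ∈ Finset.range m, (1 - x⁻¹ * ζ^(2*j+2)) with hIx
  set c : L := (-1)^m * ζ^(m^2+m) with hc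
  have hnOE : ((2*m+1 : ℕ) : L) = O * ∏ j ∈ Finset.range m, (1 - ζ^(2*j+2)) := by
    rw [← prod_one_sub_pow' hζ, prod_split' (fun k => 1 - ζ^k) m]
  have hE : ∏ j ∈ Finset.range m, (1 - ζ^(2*j+2)) = c * O := by
    have := reflect_prod' hζ 1 one_ne_zero
    simpa using this
  have hn : ((2*m+1 : ℕ) : L) = c * (O * O) := by rw [hnOE, hE]; ring
  have hfull : (1 - x) * (Ox * Ex) = 1 - x^(2*m+1) := by
    rw [← prod_one_sub_mul' hζ x, Finset.prod_range_succ', prod_split' (fun k => 1 - x * ζ^k) m]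
    simp [hOx, hEx]; ring
  have hrefl : x^m * Ix = c * Ox := reflect_prod' hζ x hx
  have hc2 : c * c = ζ^m := by
    have h1 : ((-1:L)^m) * (-1)^m = 1 := by
      rw [← pow_add]
      exact Even.neg_one_pow ⟨m, rfl⟩
    have h2 : (ζ^(m^2+m)) * ζ^(m^2+m) = ζ^m := by
      rw [← pow_add, show m^2+m+(m^2+m) = (2*m+1)*m + m by ring, pow_add, pow_mul,
        hζ.pow_eq_one, one_pow, one_mul]
    calc c * c = ((-1:L)^m * (-1)^m) * ((ζ^(m^2+m)) * ζ^(m^2+m)) := by rw [hc]; ring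
      _ = ζ^m := by rw [h1, h2, one_mul]
  calc O^2 * (1 - x^(2*m+1)) * ζ^m
      = (c*c) * (O*O) * ((1-x) * (Ox * Ex)) := by rw [hc2, hfull]; ring
    _ = (((2*m+1 : ℕ) : L)) * (1-x) * Ex * (c * Ox) := by rw [hn]; ring
    _ = (((2*m+1 : ℕ) : L)) * (1-x) * Ex * (x^m * Ix) := by rw [hrefl]
    _ = ((2*m+1 : ℕ) : L) * (1 - x) * x^m * (Ex * Ix) := by ring

/-- coprimality helper -/
lemma isCoprime_X_sub_C_right (p : Polynomial L) (x : L) (h : p.eval x ≠ 0) :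
    IsCoprime p (X - C x) := by
  have hp := Polynomial.modByMonic_add_div p (X - C x)
  rw [Polynomial.modByMonic_X_sub_C_eq_C_eval] at hp
  have h1 : Polynomial.C ((p.eval x)⁻¹) * Polynomial.C (p.eval x) = 1 := by
    rw [← Polynomial.C_mul, inv_mul_cancel₀ h, Polynomial.C_1]
  exact ⟨C (p.eval x)⁻¹, -(C (p.eval x)⁻¹ * (p /ₘ (X - C x))),
    by linear_combination Polynomial.C (p.eval x)⁻¹ * hp.symm + h1⟩

lemma one_sub_mul_ne_zero {n : ℕ} {α u : L} (hu : u ^ n = 1) (hαn : α ^ n ≠ 1) :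
    1 - α * u ≠ 0 := by
  intro h
  apply hαn
  have h1 : α * u = 1 := by linear_combination -h
  calc α ^ n = α ^ n * u ^ n := by rw [hu, mul_one]
    _ = (α * u) ^ n := (mul_pow α u n).symm
    _ = 1 := by rw [h1, one_pow]

end FieldLemmas

/-! ### Basic nonvanishing facts -/

lemma aK_ne_zero : aK ≠ 0 := by
  unfold aK
  intro h
  rw [show (0:KK) = algebraMap (MvPolynomial (Fin 4) ℚ) KK 0 from (map_zero _).symm] at h
  exact MvPolynomial.X_ne_zero 0 (IsFractionRing.injective (MvPolynomial (Fin 4) ℚ) KK h)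

lemma aK_pow_ne_one {n : ℕ} (hn : 0 < n) : aK ^ n ≠ 1 := by
  unfold aK
  rw [← map_pow, show (1 : KK) = algebraMap (MvPolynomial (Fin 4) ℚ) KK 1 from (map_one _).symm]
  intro h
  have h2 := IsFractionRing.injective (MvPolynomial (Fin 4) ℚ) KK h
  have := congrArg (MvPolynomial.eval (fun _ => (0:ℚ))) h2
  simp [zero_pow hn.ne'] at this

lemma one_sub_aK_pow_ne {n : ℕ} (hn : 0 < n) : (1:KK) - aK ^ n ≠ 0 := by
  intro h
  exact aK_pow_ne_one hn (by linear_combination -h)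

/-! ### The polynomials -/

def Pm1 (m : ℕ) : Polynomial KK := ∏ j ∈ Finset.range m, (1 - Polynomial.X ^ (2*j+1))
def Pm2 (m : ℕ) : Polynomial KK :=
  ∏ j ∈ Finset.range m, (1 - Polynomial.C aK * Polynomial.X ^ (2*j+2))
def Pm3 (m : ℕ) : Polynomial KK :=
  ∏ j ∈ Finset.range m, (1 - Polynomial.C aK⁻¹ * Polynomial.X ^ (2*j+2))
def Nm (m : ℕ) : Polynomial KK :=
  (Pm1 m)^2 * (Polynomial.C (1 - aK^(2*m+1)) * Polynomial.X ^ m)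
    - Polynomial.C (((2*m+1 : ℕ) : KK) * (1 - aK) * aK^m) * (Pm2 m * Pm3 m)
def Qm (m : ℕ) : Polynomial KK :=
  (Pm2 m * Pm3 m) * (Polynomial.C (1 - aK^(2*m+1)) * Polynomial.X ^ m)

lemma Pm2_ne_zero (m : ℕ) : Pm2 m ≠ 0 := by
  intro h
  have := congrArg (Polynomial.eval 0) h
  simp [Pm2, Polynomial.eval_prod] at this

lemma Pm3_ne_zero (m : ℕ) : Pm3 m ≠ 0 := by
  intro h
  have := congrArg (Polynomial.eval 0) h
  simp [Pm3, Polynomial.eval_prod] at this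

/-! ### Clearing denominators -/

lemma qPoch1 (m : ℕ) : qPoch q (q^2) m = algebraMap (Polynomial KK) FF (Pm1 m) := by
  unfold qPoch Pm1
  rw [map_prod]
  refine Finset.prod_congr rfl fun j _ => ?_
  simp only [map_sub, map_one, map_pow, RatFunc.algebraMap_X]
  rw [show (q:FF) = RatFunc.X from rfl]
  ring

lemma qPoch2 (m : ℕ) : qPoch (pa * q^2) (q^2) m = algebraMap (Polynomial KK) FF (Pm2 m) := by
  unfold qPoch Pm2
  rw [map_prod]
  refine Finset.prod_congr rfl fun j _ => ?_
  simp only [map_sub, map_one, map_pow, map_mul, RatFunc.algebraMap_X, RatFunc.algebraMap_C]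
  rw [show (q:FF) = RatFunc.X from rfl, show (pa:FF) = RatFunc.C aK from rfl]
  ring

lemma paInv : (pa)⁻¹ = RatFunc.C aK⁻¹ := by
  rw [show (pa:FF) = RatFunc.C aK from rfl, map_inv₀]

lemma qPoch3 (m : ℕ) : qPoch (q^2/pa) (q^2) m = algebraMap (Polynomial KK) FF (Pm3 m) := by
  unfold qPoch Pm3
  rw [map_prod]
  refine Finset.prod_congr rfl fun j _ => ?_
  simp only [map_sub, map_one, map_pow, map_mul, RatFunc.algebraMap_X, RatFunc.algebraMap_C]
  rw [show (q:FF) = RatFunc.X from rfl, div_eq_mul_inv, paInv]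
  ring

lemma clear_denoms {A B C D E : Polynomial KK}
    (hB : algebraMap (Polynomial KK) FF B ≠ 0) (hC : algebraMap (Polynomial KK) FF C ≠ 0)
    (hD : algebraMap (Polynomial KK) FF D ≠ 0) :
    ((algebraMap (Polynomial KK) FF A) ^ 2 /
        (algebraMap (Polynomial KK) FF B * algebraMap (Polynomial KK) FF C)
      - algebraMap (Polynomial KK) FF E / algebraMap (Polynomial KK) FF D)
      * algebraMap (Polynomial KK) FF ((B * C) * D)
      = algebraMap (Polynomial KK) FF (A ^ 2 * D - E * (B * C)) := by
  rw [map_mul, map_mul, map_sub, map_mul, map_mul, map_pow]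
  field_simp
  simp only [map_mul]; ring

lemma step1 (m : ℕ) :
    ((qPoch q (q ^ 2) m) ^ 2 /
        (qPoch (pa * q ^ 2) (q ^ 2) m * qPoch (q ^ 2 / pa) (q ^ 2) m)
      - (((2*m+1 : ℕ) : FF) * (1 - pa) * pa ^ m / ((1 - pa ^ (2*m+1)) * q ^ m)))
      * algebraMap (Polynomial KK) FF (Qm m) = algebraMap (Polynomial KK) FF (Nm m) := by
  rw [qPoch1, qPoch2, qPoch3]
  have hB1 : ((2*m+1:ℕ) : FF) * (1 - pa) * pa ^ m
      = algebraMap (Polynomial KK) FF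
          (Polynomial.C (((2*m+1:ℕ):KK) * (1 - aK) * aK^m)) := by
    simp only [RatFunc.algebraMap_C, map_mul, map_sub, map_one, map_pow, map_natCast]
    rw [show (pa:FF) = RatFunc.C aK from rfl]
  have hB2 : (1 - pa ^ (2*m+1)) * q ^ m
      = algebraMap (Polynomial KK) FF
          (Polynomial.C (1 - aK^(2*m+1)) * Polynomial.X ^ m) := by
    simp only [RatFunc.algebraMap_C, map_mul, map_sub, map_one, map_pow, RatFunc.algebraMap_X]
    rw [show (pa:FF) = RatFunc.C aK from rfl, show (q:FF) = RatFunc.X from rfl]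
  rw [hB1, hB2]
  have h2 : algebraMap (Polynomial KK) FF (Pm2 m) ≠ 0 :=
    RatFunc.algebraMap_ne_zero (Pm2_ne_zero m)
  have h3 : algebraMap (Polynomial KK) FF (Pm3 m) ≠ 0 :=
    RatFunc.algebraMap_ne_zero (Pm3_ne_zero m)
  have h4 : algebraMap (Polynomial KK) FF (Polynomial.C (1 - aK^(2*m+1)) * Polynomial.X ^ m) ≠ 0 := by
    apply RatFunc.algebraMap_ne_zero
    apply mul_ne_zero
    · exact Polynomial.C_ne_zero.mpr (one_sub_aK_pow_ne (by omega : 0 < 2*m+1))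
    · exact pow_ne_zero m Polynomial.X_ne_zero
  exact clear_denoms h2 h3 h4


/-! ### Divisibility -/

lemma dvd_Nm (m : ℕ) : Polynomial.cyclotomic (2*m+1) KK ∣ Nm m := by
  have hpos : 0 < 2*m+1 := by omega
  let n' : ℕ+ := ⟨2*m+1, hpos⟩
  let L := CyclotomicField n' KK
  letI : DecidableEq L := Classical.decEq L
  have hζ : IsPrimitiveRoot (IsCyclotomicExtension.zeta n' KK L) (2*m+1) :=
    IsCyclotomicExtension.zeta_spec n' KK L
  let φ : KK →+* L := algebraMap KK L
  rw [← Polynomial.map_dvd_map φ φ.injective (Polynomial.cyclotomic.monic _ KK),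
    Polynomial.map_cyclotomic,
    Polynomial.cyclotomic_eq_prod_X_sub_primitiveRoots hζ]
  apply Finset.prod_dvd_of_coprime
  · intro μ hμ ν hν hne
    exact Polynomial.pairwise_coprime_X_sub_C Function.injective_id hne
  · intro μ hμ
    have hμprim : IsPrimitiveRoot μ (2*m+1) := (mem_primitiveRoots hpos).mp hμ
    have hφa : φ aK ≠ 0 := fun h => aK_ne_zero (φ.injective (by rw [h, map_zero]))
    rw [Polynomial.dvd_iff_isRoot]
    show Polynomial.eval μ ((Nm m).map φ) = 0
    simp only [Nm, Pm1, Pm2, Pm3, Polynomial.map_sub, Polynomial.map_mul, Polynomial.map_pow,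
      Polynomial.map_prod, Polynomial.map_one, Polynomial.map_C, Polynomial.map_X,
      Polynomial.eval_sub, Polynomial.eval_mul, Polynomial.eval_pow, Polynomial.eval_prod,
      Polynomial.eval_C, Polynomial.eval_X, Polynomial.eval_one,
      map_sub, map_one, map_mul, map_pow, map_natCast, map_inv₀, Polynomial.map_natCast,
      Polynomial.eval_natCast]
    rw [sub_eq_zero]
    have := key_identity hμprim (φ aK) hφa
    linear_combination this

/-! ### Coprimality -/

lemma coprime_Qm (m : ℕ) : IsCoprime (Qm m) (Polynomial.cyclotomic (2*m+1) KK) := by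
  have hpos : 0 < 2*m+1 := by omega
  let n' : ℕ+ := ⟨2*m+1, hpos⟩
  let L := CyclotomicField n' KK
  letI : DecidableEq L := Classical.decEq L
  have hζ : IsPrimitiveRoot (IsCyclotomicExtension.zeta n' KK L) (2*m+1) :=
    IsCyclotomicExtension.zeta_spec n' KK L
  let φ : KK →+* L := algebraMap KK L
  rw [← Polynomial.isCoprime_map φ, Polynomial.map_cyclotomic,
    Polynomial.cyclotomic_eq_prod_X_sub_primitiveRoots hζ]
  apply IsCoprime.prod_right
  intro μ hμ
  have hμprim : IsPrimitiveRoot μ (2*m+1) := (mem_primitiveRoots hpos).mp hμ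
  apply isCoprime_X_sub_C_right
  have hφa : φ aK ≠ 0 := fun h => aK_ne_zero (φ.injective (by rw [h, map_zero]))
  have hφan : (φ aK) ^ (2*m+1) ≠ 1 := by
    intro h
    apply aK_pow_ne_one hpos
    apply φ.injective
    rw [map_pow, map_one, h]
  have hφan' : ((φ aK)⁻¹) ^ (2*m+1) ≠ 1 := by
    rw [inv_pow]
    intro h
    exact hφan (by rw [← inv_inv ((φ aK)^(2*m+1)), h, inv_one])
  have hμn : ∀ t : ℕ, (μ ^ t) ^ (2*m+1) = 1 := fun t => by
    rw [← pow_mul, mul_comm, pow_mul, hμprim.pow_eq_one, one_pow]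
  simp only [Qm, Pm2, Pm3, Polynomial.map_mul, Polynomial.map_prod, Polynomial.map_sub,
    Polynomial.map_one, Polynomial.map_pow, Polynomial.map_C, Polynomial.map_X,
    Polynomial.eval_mul, Polynomial.eval_prod, Polynomial.eval_sub, Polynomial.eval_pow,
    Polynomial.eval_C, Polynomial.eval_X, Polynomial.eval_one,
    map_sub, map_one, map_mul, map_pow, map_inv₀]
  apply mul_ne_zero
  apply mul_ne_zero
  · rw [Finset.prod_ne_zero_iff]
    exact fun j _ => one_sub_mul_ne_zero (hμn (2*j+2)) hφan
  · rw [Finset.prod_ne_zero_iff]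
    exact fun j _ => one_sub_mul_ne_zero (hμn (2*j+2)) hφan'
  · apply mul_ne_zero
    · intro h
      apply aK_pow_ne_one hpos
      apply φ.injective
      rw [map_pow, map_one]
      linear_combination -h
    · exact pow_ne_zero m (hμprim.ne_zero hpos.ne')

/-! ### Main theorem -/

theorem stmt10 (n : ℕ) (hn : 0 < n) (hodd : Odd n) :
    modCong
      ((qPoch q (q ^ 2) ((n - 1) / 2)) ^ 2 /
        (qPoch (pa * q ^ 2) (q ^ 2) ((n - 1) / 2) * qPoch (q ^ 2 / pa) (q ^ 2) ((n - 1) / 2)))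
      ((n : FF) * (1 - pa) * pa ^ ((n - 1) / 2) / ((1 - pa ^ n) * q ^ ((n - 1) / 2)))
      (Polynomial.cyclotomic n KK) := by
  obtain ⟨m, rfl⟩ := hodd
  rw [show (2*m+1-1)/2 = m from by omega]
  obtain ⟨P, hP⟩ := dvd_Nm m
  refine ⟨P, Qm m, coprime_Qm m, ?_⟩
  rw [step1 m, hP, map_mul]
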